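/- Permutation braids act on weakly increasing inputs without falls: let w be a permutation of {1,…,n} with reduced word (i_1,…,i_ℓ), and set P_w = M_{i_1}⋯M_{i_ℓ}. If u ∈ S is weakly increasing, i.e. u_1 ≤ u_2 ≤ ⋯ ≤ u_n, then P_w e_u = e_{u∘w^{-1}}, the basis vector of the tuple whose entry in position w(i) equals u_i for all i. -/

import Mathlib

open Matrix

/-- The tuple `u` with the entries in positions `i` and `i+1` interchanged
(0-indexed; returns `u` unchanged if `i+1` is out of range). -/
def swapTup (n N : ℕ) (i : ℕ) (u : Fin n → Fin (N + 1)) : Fin n → Fin (N + 1) :=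
  if h : i + 1 < n then u ∘ Equiv.swap ⟨i, Nat.lt_of_succ_lt h⟩ ⟨i + 1, h⟩ else u

/-- Jones's bowling-ball matrix `M_i` (0-indexed: `i` ranges over `0,…,n-2`,
corresponding to the lanes `i+1` and `i+2` in 1-indexed notation; it is the
identity matrix out of range).  Rows and columns are indexed by the tuples
`u : Fin n → Fin (N+1)` recording the number of balls in each lane:
`M_i e_u = e_{s_i u}` if `u i ≤ u (i+1)`, and
`M_i e_u = q • e_{s_i u} + (1-q) • e_u` if `u i > u (i+1)`. -/
def bowlM (F : Type*) [Field F] (q : F) (n N : ℕ) (i : ℕ) :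
    Matrix (Fin n → Fin (N + 1)) (Fin n → Fin (N + 1)) F :=
  if h : i + 1 < n then
    Matrix.of fun v u =>
      if u ⟨i, Nat.lt_of_succ_lt h⟩ ≤ u ⟨i + 1, h⟩ then
        (if v = swapTup n N i u then 1 else 0)
      else
        q * (if v = swapTup n N i u then 1 else 0) + (1 - q) * (if v = u then 1 else 0)
  else 1
/-- The adjacent transposition `s_i = (i, i+1)` of `Fin n`
(0-indexed; the identity permutation out of range). -/
def adjSwap (n : ℕ) (i : ℕ) : Equiv.Perm (Fin n) :=
  if h : i + 1 < n then Equiv.swap ⟨i, Nat.lt_of_succ_lt h⟩ ⟨i + 1, h⟩ else 1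

/-- The number of inversions of a permutation `w` of `Fin n`:
the number of pairs `i < j` with `w j < w i`. -/
def inversions (n : ℕ) (w : Equiv.Perm (Fin n)) : ℕ :=
  (Finset.univ.filter fun p : Fin n × Fin n => p.1 < p.2 ∧ w p.2 < w p.1).card

/-- A list `l` of indices (0-indexed, each in `{0, …, n-2}`) is a reduced word
for the permutation `w` if `w` is the composite of the corresponding adjacent
transpositions and the length of `l` equals the number of inversions of `w`. -/
def IsReducedWord (n : ℕ) (w : Equiv.Perm (Fin n)) (l : List ℕ) : Prop :=
  (∀ i ∈ l, i + 1 < n) ∧ (l.map (adjSwap n)).prod = w ∧ l.length = inversions n w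

/-- The product `M_{i_1} ⋯ M_{i_ℓ}` of bowling-ball matrices along a word. -/
def prodBowlM (F : Type*) [Field F] (q : F) (n N : ℕ) (l : List ℕ) :
    Matrix (Fin n → Fin (N + 1)) (Fin n → Fin (N + 1)) F :=
  (l.map (bowlM F q n N)).prod

lemma swap_lt_iff {n : ℕ} (a b c d : Fin n) (hab : (a:ℕ)+1 = b)
    (h1 : ¬(c = a ∧ d = b)) (h2 : ¬(c = b ∧ d = a)) :
    Equiv.swap a b c < Equiv.swap a b d ↔ c < d := by
  rw [Equiv.swap_apply_def, Equiv.swap_apply_def]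
  simp only [Fin.lt_def, Fin.ext_iff, not_and, apply_ite Fin.val] at *
  split_ifs <;> omega

lemma inversions_swap_mul {n : ℕ} (w : Equiv.Perm (Fin n)) (a b : Fin n)
    (hab : (a:ℕ)+1 = b) (h : w⁻¹ a < w⁻¹ b) :
    inversions n (Equiv.swap a b * w) = inversions n w + 1 := by
  classical
  set s := Equiv.swap a b with hs
  set p0 : Fin n × Fin n := (w⁻¹ a, w⁻¹ b) with hp0
  have hab' : a ≠ b := by simp [Fin.ext_iff]; omega
  have hP0 : (s * w) p0.2 < (s * w) p0.1 := by
    simp only [hp0, Equiv.Perm.mul_apply, Equiv.Perm.coe_inv, Equiv.apply_symm_apply, hs,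
      Equiv.swap_apply_left, Equiv.swap_apply_right]
    exact Fin.lt_def.mpr (by omega)
  have hP0' : ¬ w p0.2 < w p0.1 := by
    simp only [hp0, Equiv.Perm.coe_inv, Equiv.apply_symm_apply]
    exact not_lt.mpr (Fin.le_def.mpr (by omega))
  have key : ∀ p : Fin n × Fin n, p ≠ p0 → p.1 < p.2 →
      ((s * w) p.2 < (s * w) p.1 ↔ w p.2 < w p.1) := by
    intro p hp hplt
    simp only [Equiv.Perm.mul_apply, hs]
    refine swap_lt_iff a b (w p.2) (w p.1) hab ?_ ?_
    · rintro ⟨h1, h2⟩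
      have e1 : p.2 = w⁻¹ a := by rw [← h1, Equiv.Perm.coe_inv, Equiv.symm_apply_apply]
      have e2 : p.1 = w⁻¹ b := by rw [← h2, Equiv.Perm.coe_inv, Equiv.symm_apply_apply]
      rw [e1, e2] at hplt
      exact absurd hplt (not_lt.mpr h.le)
    · rintro ⟨h1, h2⟩
      apply hp
      have e1 : p.2 = w⁻¹ b := by rw [← h1, Equiv.Perm.coe_inv, Equiv.symm_apply_apply]
      have e2 : p.1 = w⁻¹ a := by rw [← h2, Equiv.Perm.coe_inv, Equiv.symm_apply_apply]
      rw [hp0, Prod.ext_iff]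
      exact ⟨e2, e1⟩
  unfold inversions
  have e1 : (Finset.univ.filter fun p : Fin n × Fin n => p.1 < p.2 ∧ (s * w) p.2 < (s * w) p.1)
      = insert p0 (Finset.univ.filter fun p : Fin n × Fin n => p.1 < p.2 ∧ w p.2 < w p.1) := by
    ext p
    simp only [Finset.mem_filter, Finset.mem_insert, Finset.mem_univ, true_and]
    by_cases hp : p = p0
    · subst hp
      exact ⟨fun _ => Or.inl rfl, fun _ => ⟨h, hP0⟩⟩
    · constructor
      · rintro ⟨h1, h2⟩; exact Or.inr ⟨h1, (key p hp h1).mp h2⟩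
      · rintro (rfl | ⟨h1, h2⟩)
        · exact absurd rfl hp
        · exact ⟨h1, (key p hp h1).mpr h2⟩
  rw [e1, Finset.card_insert_of_notMem]
  intro hc
  rw [Finset.mem_filter] at hc
  exact hP0' hc.2.2

lemma inversions_swap_mul' {n : ℕ} (w : Equiv.Perm (Fin n)) (a b : Fin n)
    (hab : (a:ℕ)+1 = b) (h : w⁻¹ b < w⁻¹ a) :
    inversions n w = inversions n (Equiv.swap a b * w) + 1 := by
  have h2 : (Equiv.swap a b * w)⁻¹ a < (Equiv.swap a b * w)⁻¹ b := by
    simpa [_root_.mul_inv_rev, Equiv.Perm.mul_apply, Equiv.swap_apply_left,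
      Equiv.swap_apply_right] using h
  have := inversions_swap_mul (Equiv.swap a b * w) a b hab h2
  rwa [Equiv.swap_mul_self_mul] at this

lemma inversions_one (n : ℕ) : inversions n 1 = 0 := by
  unfold inversions
  rw [Finset.card_eq_zero, Finset.filter_eq_empty_iff]
  rintro p - ⟨h1, h2⟩
  simp only [Equiv.Perm.one_apply] at h2
  exact absurd h1 (not_lt.mpr h2.le)

lemma inversions_prod_le (n : ℕ) (l : List ℕ) (hl : ∀ i ∈ l, i + 1 < n) :
    inversions n (l.map (adjSwap n)).prod ≤ l.length := by
  induction l with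
  | nil => simp [inversions_one]
  | cons i l ih =>
    have hi : i + 1 < n := hl i (List.mem_cons_self)
    have ih' := ih (fun j hj => hl j (List.mem_cons_of_mem i hj))
    simp only [List.map_cons, List.prod_cons, List.length_cons]
    set w' := (l.map (adjSwap n)).prod with hw'
    rw [adjSwap, dif_pos hi]
    set a : Fin n := ⟨i, Nat.lt_of_succ_lt hi⟩ with ha
    set b : Fin n := ⟨i + 1, hi⟩ with hb
    have hab : (a:ℕ)+1 = b := rfl
    have hne : w'⁻¹ a ≠ w'⁻¹ b := by
      apply (Equiv.injective w'⁻¹).ne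
      simp [ha, hb, Fin.ext_iff]
    rcases hne.lt_or_gt with hlt | hgt
    · rw [inversions_swap_mul w' a b hab hlt]; omega
    · have := inversions_swap_mul' w' a b hab hgt; omega

lemma perm_eq_one_of_inversions_eq_zero {n : ℕ} (w : Equiv.Perm (Fin n))
    (h : inversions n w = 0) : w = 1 := by
  unfold inversions at h
  rw [Finset.card_eq_zero, Finset.filter_eq_empty_iff] at h
  have hmono : StrictMono w := by
    intro i j hij
    have hne : w i ≠ w j := (Equiv.injective w).ne hij.ne
    by_contra hlt
    exact h (Finset.mem_univ (i, j)) ⟨hij, lt_of_le_of_ne (not_lt.mp hlt) hne.symm⟩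
  haveI : WellFoundedLT (Fin n) := inferInstance
  have hrange : Set.range ⇑w = Set.range (id : Fin n → Fin n) := by
    rw [Set.range_id, Set.range_eq_univ]
    exact Equiv.surjective w
  have := (hmono.range_inj strictMono_id).mp hrange
  exact Equiv.ext fun x => congrFun this x

lemma bowlM_mulVec_single {F : Type*} [Field F] (q : F) {n N i : ℕ} (h : i + 1 < n)
    (x : Fin n → Fin (N + 1)) (hx : x ⟨i, Nat.lt_of_succ_lt h⟩ ≤ x ⟨i + 1, h⟩) :
    bowlM F q n N i *ᵥ Pi.single x 1 = Pi.single (swapTup n N i x) 1 := by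
  rw [bowlM, dif_pos h, mulVec_single_one]
  funext v
  simp only [col_apply, of_apply, if_pos hx, mul_one, Pi.single_apply]

/-- **Permutation braids act on weakly increasing inputs without falls.**
If `l` is a reduced word for the permutation `w` and `u` is weakly
increasing, then `P_w e_u = e_{u ∘ w⁻¹}`, the basis vector of the tuple
whose entry in position `w i` equals `u i` for all `i`. -/
theorem prodBowlM_monotone_input (F : Type*) [Field F] (q : F) (n N : ℕ)
    (hn : 2 ≤ n) (hN : 1 ≤ N) (w : Equiv.Perm (Fin n)) (l : List ℕ)
    (hl : IsReducedWord n w l) (u : Fin n → Fin (N + 1)) (hu : Monotone u) :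
    prodBowlM F q n N l *ᵥ Pi.single u 1 = Pi.single (u ∘ ⇑w⁻¹) 1 := by
  induction l generalizing w with
  | nil =>
    obtain ⟨-, hw, hlen⟩ := hl
    simp only [List.map_nil, List.prod_nil] at hw
    simp only [List.length_nil] at hlen
    have hw1 : w = 1 := hw.symm
    subst hw1
    have h1 : prodBowlM F q n N [] = 1 := by simp [prodBowlM]
    rw [h1, Matrix.one_mulVec]
    simp
  | cons i l ih =>
    obtain ⟨hval, hw, hlen⟩ := hl
    have hi : i + 1 < n := hval i (List.mem_cons_self)
    set w' := (l.map (adjSwap n)).prod with hw'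
    set a : Fin n := ⟨i, Nat.lt_of_succ_lt hi⟩ with ha
    set b : Fin n := ⟨i + 1, hi⟩ with hb
    have hab : (a:ℕ)+1 = b := rfl
    have hsw : w = Equiv.swap a b * w' := by
      rw [← hw]; simp only [List.map_cons, List.prod_cons]
      rw [adjSwap, dif_pos hi]
    have hle : inversions n w' ≤ l.length :=
      inversions_prod_le n l (fun j hj => hval j (List.mem_cons_of_mem i hj))
    have hne : w'⁻¹ a ≠ w'⁻¹ b := by
      apply (Equiv.injective w'⁻¹).ne
      simp [ha, hb, Fin.ext_iff]
    simp only [List.length_cons] at hlen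
    rcases hne.lt_or_gt with hlt | hgt
    · have hinv : inversions n w = inversions n w' + 1 := by
        rw [hsw]; exact inversions_swap_mul w' a b hab hlt
      have hred' : IsReducedWord n w' l :=
        ⟨fun j hj => hval j (List.mem_cons_of_mem i hj), rfl, by omega⟩
      have ihres := ih w' hred'
      rw [prodBowlM, List.map_cons, List.prod_cons, ← mulVec_mulVec]
      rw [show ((l.map (bowlM F q n N)).prod) = prodBowlM F q n N l from rfl, ihres]
      have hcond : (u ∘ ⇑w'⁻¹) ⟨i, Nat.lt_of_succ_lt hi⟩ ≤ (u ∘ ⇑w'⁻¹) ⟨i + 1, hi⟩ :=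
        hu hlt.le
      have hfun : swapTup n N i (u ∘ ⇑w'⁻¹) = u ∘ ⇑w⁻¹ := by
        rw [swapTup, dif_pos hi]
        funext x
        simp only [hsw, _root_.mul_inv_rev, Equiv.swap_inv, Function.comp_apply,
          Equiv.Perm.coe_mul, Equiv.Perm.mul_apply]
        rfl
      rw [bowlM_mulVec_single q hi _ hcond, hfun]
    · have hinv := inversions_swap_mul' w' a b hab hgt
      rw [← hsw] at hinv
      omega
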